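/- Let V be a finite set of vertices with a distinguished element v_c, let d : V → ℕ be a degree function satisfying d(v) ≥ 3 for every v ≠ v_c and d(v_c) ≥ 1, and let E, L be natural numbers such that ∑_{v ∈ V} d(v) = 2E and E = |V| − 1 + L. Then E ≤ 3L − 1 and |V| ≤ 2L. Moreover, if E = 3L − 1, then d(v) = 3 for every v ≠ v_c and d(v_c) = 1. -/
import Mathlib


/-- Degree bound for reduced graphs: if every non-ciliated vertex has degree ≥ 3,
the ciliated vertex has degree ≥ 1, the handshake identity `∑ d = 2E` holds and
`E = |V| - 1 + L`, then `E ≤ 3L - 1` and `|V| ≤ 2L`; moreover if `E = 3L - 1`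
then every non-ciliated vertex has degree exactly 3 and the ciliated vertex degree 1. -/
theorem reduced_graph_degree_bound {V : Type*} [Fintype V] (vc : V) (d : V → ℕ)
    (E L : ℕ)
    (hd : ∀ v, v ≠ vc → 3 ≤ d v) (hdc : 1 ≤ d vc)
    (hsum : ∑ v, d v = 2 * E)
    (hEL : E + 1 = Fintype.card V + L) :
    E + 1 ≤ 3 * L ∧ Fintype.card V ≤ 2 * L ∧
      (E + 1 = 3 * L → (∀ v, v ≠ vc → d v = 3) ∧ d vc = 1) := by
  classical
  set f : V → ℕ := fun v => if v = vc then 1 else 3 with hf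
  have hle : ∀ v ∈ Finset.univ, f v ≤ d v := by
    intro v _
    by_cases h : v = vc
    · simp [hf, h]; exact h ▸ hdc
    · simp [hf, h]; exact hd v h
  have hsumf : ∑ v, f v = 3 * (Fintype.card V - 1) + 1 := by
    rw [← Finset.add_sum_erase _ f (Finset.mem_univ vc)]
    have : ∀ v ∈ Finset.univ.erase vc, f v = 3 := by
      intro v hv
      simp [hf, Finset.ne_of_mem_erase hv]
    rw [Finset.sum_congr rfl this, Finset.sum_const, Finset.card_erase_of_mem (Finset.mem_univ vc)]
    simp [hf, Finset.card_univ, mul_comm, Nat.add_comm]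
  have hcard : 1 ≤ Fintype.card V := Fintype.card_pos_iff.mpr ⟨vc⟩
  have hfd : ∑ v, f v ≤ ∑ v, d v := Finset.sum_le_sum hle
  rw [hsumf, hsum] at hfd
  refine ⟨by omega, by omega, fun heq => ?_⟩
  have hex : ∑ v, f v = ∑ v, d v := by rw [hsumf, hsum]; omega
  have hall : ∀ v ∈ Finset.univ, f v = d v := fun v hv =>
    (Finset.sum_eq_sum_iff_of_le hle).mp hex v hv
  constructor
  · intro v hv
    have := hall v (Finset.mem_univ v)
    simpa [hf, hv] using this.symm
  · have := hall vc (Finset.mem_univ vc)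
    simpa [hf] using this.symm
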